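/- arXiv:2303.14208 — 2 statements merged into one kernel-verified Lean document; each statement's English description precedes it below -/
import Mathlib

section
/- Let E : [0,∞) → ℝ be differentiable, k : [0,∞) → ℝ locally integrable, b > 0, and suppose E'(t) ≤ 6|k(t)|·𝓔(t) for all t ≥ 0, where 𝓔(t) := max(c₀, b²·sup_{s∈[0,t]} E(s)) for some constant c₀ ≥ 0. Then 𝓔(t) ≤ 𝓔(0)·exp(6b²∫₀ᵗ |k(s)| ds) for all t ≥ 0, and consequently E(t) ≤ (1/b²)·exp(6b²∫₀ᵗ |k(s)| ds)·𝓔(0). -/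
open Real MeasureTheory intervalIntegral Set Filter Topology

lemma gronwall_aux (A : ℝ) (c u : ℝ → ℝ)
    (hcnn : ∀ s, 0 ≤ c s)
    (hcint : ∀ a d : ℝ, IntervalIntegrable c volume a d)
    (hunn : ∀ t, 0 ≤ u t)
    (humono : Monotone u)
    (hCint : ∀ a d : ℝ, 0 ≤ a → a ≤ d → IntervalIntegrable (fun s => c s * u s) volume a d)
    (hmain : ∀ t : ℝ, 0 ≤ t → u t ≤ A + ∫ s in (0:ℝ)..t, c s * u s) :
    ∀ T : ℝ, 0 ≤ T → u T ≤ A * Real.exp (∫ s in (0:ℝ)..T, c s) := by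
  intro T hT
  have hA : 0 ≤ A := by
    have := hmain 0 le_rfl
    simpa [intervalIntegral.integral_same] using (hunn 0).trans this
  set I : ℝ → ℝ := fun t => ∫ s in (0:ℝ)..t, c s with hI
  have hIcont : Continuous I := intervalIntegral.continuous_primitive hcint 0
  have hImono : ∀ a d : ℝ, a ≤ d → I a ≤ I d := by
    intro a d had
    have h1 : I d - I a = ∫ s in a..d, c s :=
      intervalIntegral.integral_interval_sub_left (hcint 0 d) (hcint 0 a)
    have h2 : 0 ≤ ∫ s in a..d, c s :=
      intervalIntegral.integral_nonneg had fun x _ => hcnn x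
    linarith
  have hI0 : I 0 = 0 := intervalIntegral.integral_same
  have hITnn : 0 ≤ I T := by rw [← hI0]; exact hImono 0 T hT
  have hCmono : ∀ a d : ℝ, 0 ≤ a → a ≤ d →
      (∫ s in (0:ℝ)..a, c s * u s) ≤ ∫ s in (0:ℝ)..d, c s * u s := by
    intro a d ha had
    have h1 := intervalIntegral.integral_interval_sub_left
      (hCint 0 d le_rfl (ha.trans had)) (hCint 0 a le_rfl ha)
    have h2 : 0 ≤ ∫ s in a..d, c s * u s :=
      intervalIntegral.integral_nonneg had fun x _ => mul_nonneg (hcnn x) (hunn x)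
    linarith
  -- key discrete bound
  have hkey : ∀ n : ℕ, I T < n → u T ≤ A / (1 - I T / n) ^ n := by
    intro n hn
    have hn0 : 0 < (n : ℝ) := hITnn.trans_lt hn
    set ε : ℝ := I T / n with hε
    have hεnn : 0 ≤ ε := div_nonneg hITnn hn0.le
    have hε1 : ε < 1 := (div_lt_one hn0).2 hn
    have hnε : (n : ℝ) * ε = I T := by rw [hε]; field_simp [hn0.ne']
    set Q : ℕ → Set ℝ := fun i => Icc 0 T ∩ {s | (i : ℝ) * ε ≤ I s} with hQ
    have hQclosed : ∀ i, IsClosed (Q i) :=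
      fun i => isClosed_Icc.inter (isClosed_le continuous_const hIcont)
    have hQbdd : ∀ i, BddBelow (Q i) := fun i => ⟨0, fun s hs => hs.1.1⟩
    have hQne : ∀ i : ℕ, i ≤ n → (Q i).Nonempty := by
      intro i hi
      refine ⟨T, ⟨hT, le_rfl⟩, ?_⟩
      have : (i : ℝ) * ε ≤ (n : ℝ) * ε :=
        mul_le_mul_of_nonneg_right (Nat.cast_le.2 hi) hεnn
      simpa [hnε] using this
    set τ : ℕ → ℝ := fun i => sInf (Q i) with hτ
    have hmem : ∀ i : ℕ, i ≤ n → τ i ∈ Q i :=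
      fun i hi => (hQclosed i).csInf_mem (hQne i hi) (hQbdd i)
    have hτnn : ∀ i : ℕ, i ≤ n → 0 ≤ τ i := fun i hi => (hmem i hi).1.1
    have hτleT : ∀ i : ℕ, i ≤ n → τ i ≤ T := fun i hi => (hmem i hi).1.2
    have hIτge : ∀ i : ℕ, i ≤ n → (i : ℝ) * ε ≤ I (τ i) := fun i hi => (hmem i hi).2
    have hτmono : ∀ i j : ℕ, i ≤ j → j ≤ n → τ i ≤ τ j := by
      intro i j hij hj
      refine csInf_le_csInf (hQbdd i) (hQne j hj) ?_
      intro s hs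
      exact ⟨hs.1, le_trans (mul_le_mul_of_nonneg_right (Nat.cast_le.2 hij) hεnn) hs.2⟩
    have hIτle : ∀ i : ℕ, i ≤ n → I (τ i) ≤ (i : ℝ) * ε := by
      intro i hi
      rcases eq_or_lt_of_le (hτnn i hi) with h0 | h0
      · rw [← h0, hI0]; positivity
      · have htend : Tendsto I (𝓝[<] (τ i)) (𝓝 (I (τ i))) :=
          (hIcont.tendsto _).mono_left nhdsWithin_le_nhds
        refine le_of_tendsto htend ?_
        filter_upwards [Ioo_mem_nhdsLT h0] with s hs
        by_contra hcon
        push_neg at hcon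
        have : τ i ≤ s :=
          csInf_le (hQbdd i) ⟨⟨hs.1.le, hs.2.le.trans (hτleT i hi)⟩, hcon.le⟩
        exact absurd this (not_le.2 hs.2)
    have hτ0 : τ 0 = 0 := by
      refine le_antisymm (csInf_le (hQbdd 0) ⟨⟨le_rfl, hT⟩, by simp [hI0]⟩) (hτnn 0 (Nat.zero_le n))
    -- the induction
    have hind : ∀ i : ℕ, i ≤ n →
        A + (∫ s in (0:ℝ)..(τ i), c s * u s) ≤ A / (1 - ε) ^ i := by
      intro i
      induction i with
      | zero => intro _; simp [hτ0, intervalIntegral.integral_same]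
      | succ i ih =>
        intro hi
        have hi' : i ≤ n := Nat.le_of_succ_le hi
        have h1 := ih hi'
        have hττ : τ i ≤ τ (i + 1) := hτmono i (i + 1) (Nat.le_succ i) hi
        have hτinn : 0 ≤ τ i := hτnn i hi'
        have hτi1nn : 0 ≤ τ (i + 1) := hτnn (i + 1) hi
        have hsplit : (∫ s in (0:ℝ)..(τ (i+1)), c s * u s)
            = (∫ s in (0:ℝ)..(τ i), c s * u s) + ∫ s in (τ i)..(τ (i+1)), c s * u s :=
          (intervalIntegral.integral_add_adjacent_intervals
            (hCint 0 (τ i) le_rfl hτinn) (hCint (τ i) (τ (i+1)) hτinn hττ)).symm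
        have hZ : (∫ s in (τ i)..(τ (i+1)), c s * u s) ≤ u (τ (i+1)) * ε := by
          have hb1 : (∫ s in (τ i)..(τ (i+1)), c s * u s)
              ≤ ∫ s in (τ i)..(τ (i+1)), c s * u (τ (i+1)) := by
            refine intervalIntegral.integral_mono_on hττ
              (hCint (τ i) (τ (i+1)) hτinn hττ) ((hcint _ _).mul_const _) ?_
            intro x hx
            exact mul_le_mul_of_nonneg_left (humono hx.2) (hcnn x)
          have hb2 : (∫ s in (τ i)..(τ (i+1)), c s * u (τ (i+1)))
              = (I (τ (i+1)) - I (τ i)) * u (τ (i+1)) := by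
            rw [intervalIntegral.integral_mul_const,
              intervalIntegral.integral_interval_sub_left (hcint 0 (τ (i+1))) (hcint 0 (τ i))]
          have hb3 : I (τ (i+1)) - I (τ i) ≤ ε := by
            have := hIτge i hi'
            have h2 := hIτle (i + 1) hi
            push_cast at h2 ⊢
            nlinarith
          calc (∫ s in (τ i)..(τ (i+1)), c s * u s) ≤ _ := hb1
            _ = (I (τ (i+1)) - I (τ i)) * u (τ (i+1)) := hb2
            _ ≤ ε * u (τ (i+1)) := mul_le_mul_of_nonneg_right hb3 (hunn _)
            _ = u (τ (i+1)) * ε := mul_comm _ _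
        have h2 : u (τ (i + 1)) ≤ A + ∫ s in (0:ℝ)..(τ (i+1)), c s * u s :=
          hmain _ hτi1nn
        have hpow : (0:ℝ) < (1 - ε) ^ i := pow_pos (by linarith) i
        have hgoal : (A + ∫ s in (0:ℝ)..(τ (i+1)), c s * u s) * (1 - ε)
            ≤ A / (1 - ε) ^ i := by
          have : (A + ∫ s in (0:ℝ)..(τ (i+1)), c s * u s) * (1 - ε)
              ≤ A + ∫ s in (0:ℝ)..(τ i), c s * u s := by nlinarith [hsplit, hZ, h2]
          linarith
        rw [pow_succ, ← div_div]
        exact (le_div_iff₀ (by linarith)).2 hgoal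
    -- final step from τ n to T
    have hIτn : I (τ n) = I T := by
      have h1 := hIτge n le_rfl
      have h2 := hImono (τ n) T (hτleT n le_rfl)
      rw [← hnε] at h2 ⊢
      linarith
    have hlast : (∫ s in (τ n)..T, c s * u s) ≤ 0 := by
      have hb1 : (∫ s in (τ n)..T, c s * u s) ≤ ∫ s in (τ n)..T, c s * u T := by
        refine intervalIntegral.integral_mono_on (hτleT n le_rfl)
          (hCint (τ n) T (hτnn n le_rfl) (hτleT n le_rfl)) ((hcint _ _).mul_const _) ?_
        intro x hx
        exact mul_le_mul_of_nonneg_left (humono hx.2) (hcnn x)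
      have hb2 : (∫ s in (τ n)..T, c s * u T) = (I T - I (τ n)) * u T := by
        rw [intervalIntegral.integral_mul_const,
          intervalIntegral.integral_interval_sub_left (hcint 0 T) (hcint 0 (τ n))]
      rw [hb2, hIτn] at hb1
      simpa using hb1
    have hsplit2 : (∫ s in (0:ℝ)..T, c s * u s)
        = (∫ s in (0:ℝ)..(τ n), c s * u s) + ∫ s in (τ n)..T, c s * u s :=
      (intervalIntegral.integral_add_adjacent_intervals
        (hCint 0 (τ n) le_rfl (hτnn n le_rfl))
        (hCint (τ n) T (hτnn n le_rfl) (hτleT n le_rfl))).symm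
    have := hind n le_rfl
    have hm := hmain T hT
    rw [hsplit2] at hm
    linarith
  -- take the limit
  have hlim : Tendsto (fun n : ℕ => A / (1 - I T / n) ^ n) atTop (𝓝 (A * Real.exp (I T))) := by
    have h1 := Real.tendsto_one_add_div_pow_exp (-(I T))
    have h2 : Tendsto (fun n : ℕ => A / ((1 + -(I T) / n) ^ n)) atTop
        (𝓝 (A / Real.exp (-(I T)))) := tendsto_const_nhds.div h1 (Real.exp_ne_zero _)
    have h3 : A / Real.exp (-(I T)) = A * Real.exp (I T) := by
      rw [Real.exp_neg, div_eq_mul_inv, inv_inv]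
    rw [h3] at h2
    refine h2.congr fun n => by rw [sub_eq_add_neg, neg_div]
  refine ge_of_tendsto hlim ?_
  refine eventually_atTop.2 ⟨⌈I T⌉₊ + 1, fun n hn => hkey n ?_⟩
  have h1 : I T ≤ (⌈I T⌉₊ : ℝ) := Nat.le_ceil _
  have h2 : (⌈I T⌉₊ : ℝ) < n := by exact_mod_cast Nat.lt_of_lt_of_le (Nat.lt_succ_self _) hn
  linarith

/-- The functional `𝓔(t) = max(c₀, b² · sup_{s ∈ [0,t]} E(s))`. -/
noncomputable def calE (E : ℝ → ℝ) (b c₀ t : ℝ) : ℝ :=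
  max c₀ (b ^ 2 * sSup (E '' Set.Icc 0 t))

/-- the Gronwall step of Proposition 2.1. -/
theorem stmt2 (E k : ℝ → ℝ) (E' : ℝ → ℝ) (b c₀ : ℝ)
    (hb : 0 < b) (hc₀ : 0 ≤ c₀)
    (hE : ∀ t : ℝ, HasDerivAt E (E' t) t)
    (hk : ∀ a c : ℝ, IntervalIntegrable (fun s => |k s|) volume a c)
    (hineq : ∀ t : ℝ, 0 ≤ t → E' t ≤ 6 * |k t| * calE E b c₀ t) :
    ∀ t : ℝ, 0 ≤ t →
      calE E b c₀ t ≤ calE E b c₀ 0 * Real.exp (6 * b ^ 2 * ∫ s in (0:ℝ)..t, |k s|)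
      ∧ E t ≤ (1 / b ^ 2) * Real.exp (6 * b ^ 2 * ∫ s in (0:ℝ)..t, |k s|) * calE E b c₀ 0 := by
  have hEc : Continuous E := by
    rw [continuous_iff_continuousAt]; exact fun t => (hE t).continuousAt
  set u : ℝ → ℝ := calE E b c₀ with hu
  have hb2 : (0:ℝ) < b ^ 2 := by positivity
  have hbdd : ∀ t : ℝ, BddAbove (E '' Icc 0 t) := fun t =>
    (isCompact_Icc.image hEc).bddAbove
  have hne : ∀ t : ℝ, 0 ≤ t → (E '' Icc 0 t).Nonempty := fun t ht =>
    (nonempty_Icc.2 ht).image E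
  have hF2 : ∀ t, 0 ≤ t → ∀ s ∈ Icc (0:ℝ) t, b ^ 2 * E s ≤ u t := by
    intro t ht s hs
    refine le_trans ?_ (le_max_right _ _)
    exact mul_le_mul_of_nonneg_left (le_csSup (hbdd t) (mem_image_of_mem E hs)) hb2.le
  have hu0 : ∀ t, c₀ ≤ u t := fun t => le_max_left _ _
  have hunn : ∀ t, 0 ≤ u t := fun t => hc₀.trans (hu0 t)
  have humono : ∀ s t : ℝ, 0 ≤ s → s ≤ t → u s ≤ u t := by
    intro s t hs hst
    exact max_le_max le_rfl (mul_le_mul_of_nonneg_left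
      (csSup_le_csSup (hbdd t) (hne s hs) (image_mono (f := E) (Icc_subset_Icc le_rfl hst))) hb2.le)
  set v : ℝ → ℝ := fun t => u (max t 0) with hv
  have hvmono : Monotone v := fun s t hst =>
    humono _ _ (le_max_right _ _) (max_le_max hst le_rfl)
  have hvmeas : Measurable v := hvmono.measurable
  have hveq : ∀ t : ℝ, 0 ≤ t → v t = u t := fun t ht => by
    simp only [hv, max_eq_left ht]
  have hvnn : ∀ t, 0 ≤ v t := fun t => hunn _
  set c : ℝ → ℝ := fun s => 6 * b ^ 2 * |k s| with hc
  have hcnn : ∀ s, 0 ≤ c s := fun s => by positivity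
  have hcint : ∀ a d : ℝ, IntervalIntegrable c volume a d := fun a d =>
    (hk a d).const_mul _
  -- integrability of |k| * v on compact intervals
  have hphi : ∀ a d : ℝ, a ≤ d → IntegrableOn (fun s => |k s| * v s) (Icc a d) volume := by
    intro a d had
    have hka : IntegrableOn (fun s => |k s|) (Icc a d) volume :=
      (intervalIntegrable_iff_integrableOn_Icc_of_le had).1 (hk a d)
    refine Integrable.mono (hka.const_mul (v d)) ?_ ?_
    · exact (hka.aestronglyMeasurable.mul (hvmeas.aestronglyMeasurable.restrict))
    · filter_upwards [ae_restrict_mem measurableSet_Icc] with s hs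
      have h1 : 0 ≤ |k s| * v s := mul_nonneg (abs_nonneg _) (hvnn s)
      have h2 : |k s| * v s ≤ v d * |k s| := by
        rw [mul_comm]
        exact mul_le_mul_of_nonneg_right (hvmono hs.2) (abs_nonneg _)
      rw [Real.norm_eq_abs, Real.norm_eq_abs, abs_of_nonneg h1]
      exact h2.trans (le_abs_self _)
  have hCint : ∀ a d : ℝ, 0 ≤ a → a ≤ d →
      IntervalIntegrable (fun s => c s * v s) volume a d := by
    intro a d _ had
    rw [intervalIntegrable_iff_integrableOn_Icc_of_le had]
    exact ((hphi a d had).const_mul (6 * b ^ 2)).congr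
      (Filter.EventuallyEq.symm (ae_of_all _ fun s => by simp only [hc]; ring))
  -- the main integral inequality
  have hmain : ∀ t : ℝ, 0 ≤ t → v t ≤ v 0 + ∫ s in (0:ℝ)..t, c s * v s := by
    intro t ht
    have hphiint : IntegrableOn (fun s => 6 * |k s| * v s) (Icc 0 t) volume := by
      exact ((hphi 0 t ht).const_mul (6:ℝ)).congr
        (Filter.EventuallyEq.symm (ae_of_all _ fun s => by ring))
    have hder : E t - E 0 ≤ ∫ s in (0:ℝ)..t, 6 * |k s| * v s := by
      refine intervalIntegral.sub_le_integral_of_hasDeriv_right_of_le ht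
        hEc.continuousOn (fun x _ => (hE x).hasDerivWithinAt) hphiint ?_
      intro x hx
      have := hineq x hx.1.le
      rw [hveq x hx.1.le]
      exact this
    have hconst : ∀ t' : ℝ, (∫ s in (0:ℝ)..t', c s * v s)
        = b ^ 2 * ∫ s in (0:ℝ)..t', 6 * |k s| * v s := by
      intro t'
      rw [← intervalIntegral.integral_const_mul]
      refine intervalIntegral.integral_congr fun s _ => ?_
      simp only [hc]; ring
    -- bound each E s for s in [0, t]
    have hEs : ∀ s ∈ Icc (0:ℝ) t, b ^ 2 * E s ≤ v 0 + ∫ s' in (0:ℝ)..t, c s' * v s' := by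
      intro s hs
      have hders : E s - E 0 ≤ ∫ s' in (0:ℝ)..s, 6 * |k s'| * v s' := by
        refine intervalIntegral.sub_le_integral_of_hasDeriv_right_of_le hs.1
          hEc.continuousOn (fun x _ => (hE x).hasDerivWithinAt)
          (hphiint.mono_set (Icc_subset_Icc le_rfl hs.2)) ?_
        intro x hx
        have := hineq x hx.1.le
        rw [hveq x hx.1.le]
        exact this
      have h1 : b ^ 2 * (E s - E 0) ≤ ∫ s' in (0:ℝ)..s, c s' * v s' := by
        rw [hconst s]
        exact mul_le_mul_of_nonneg_left hders hb2.le
      have h2 : (∫ s' in (0:ℝ)..s, c s' * v s') ≤ ∫ s' in (0:ℝ)..t, c s' * v s' := by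
        have hadd := intervalIntegral.integral_add_adjacent_intervals
          (hCint 0 s le_rfl hs.1) (hCint s t hs.1 hs.2)
        have hpos : 0 ≤ ∫ s' in s..t, c s' * v s' :=
          intervalIntegral.integral_nonneg hs.2 fun x _ => mul_nonneg (hcnn x) (hvnn x)
        linarith
      have h3 : b ^ 2 * E 0 ≤ v 0 := by
        rw [hveq 0 le_rfl]
        exact hF2 0 le_rfl 0 ⟨le_rfl, le_rfl⟩
      linarith
    -- conclude for the sup
    rw [hveq t ht]
    have hintnn : 0 ≤ ∫ s' in (0:ℝ)..t, c s' * v s' :=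
      intervalIntegral.integral_nonneg ht fun x _ => mul_nonneg (hcnn x) (hvnn x)
    refine max_le ?_ ?_
    · have := hu0 0
      have h0 : c₀ ≤ v 0 := by rw [hveq 0 le_rfl]; exact hu0 0
      linarith
    · set R := v 0 + ∫ s' in (0:ℝ)..t, c s' * v s' with hR
      have hsup : sSup (E '' Icc 0 t) ≤ R / b ^ 2 := by
        refine csSup_le ((hne t ht)) ?_
        rintro y ⟨s, hs, rfl⟩
        rw [le_div_iff₀ hb2]
        rw [mul_comm]
        exact hEs s hs
      calc b ^ 2 * sSup (E '' Icc 0 t) ≤ b ^ 2 * (R / b ^ 2) :=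
            mul_le_mul_of_nonneg_left hsup hb2.le
        _ = R := by field_simp
  -- apply the Gronwall lemma
  intro T hT
  have happ := gronwall_aux (v 0) c v hcnn hcint hvnn hvmono hCint hmain T hT
  have hcr : (∫ s in (0:ℝ)..T, c s) = 6 * b ^ 2 * ∫ s in (0:ℝ)..T, |k s| := by
    simp only [hc]
    rw [intervalIntegral.integral_const_mul]
  rw [hcr, hveq T hT, hveq 0 le_rfl] at happ
  refine ⟨happ, ?_⟩
  have hET : b ^ 2 * E T ≤ u T := hF2 T hT T ⟨hT, le_rfl⟩
  have : b ^ 2 * E T ≤ u 0 * Real.exp (6 * b ^ 2 * ∫ s in (0:ℝ)..T, |k s|) :=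
    hET.trans happ
  rw [show (1 / b ^ 2) * Real.exp (6 * b ^ 2 * ∫ s in (0:ℝ)..T, |k s|) * u 0
      = (u 0 * Real.exp (6 * b ^ 2 * ∫ s in (0:ℝ)..T, |k s|)) / b ^ 2 by ring]
  rw [le_div_iff₀ hb2]
  linarith
end

section
/- Let u : [0,∞) → ℝ≥0 be continuous, τ̄ ≥ 0, M̃ ≥ 0, and φ : [0,∞) → ℝ≥0 locally integrable. Define ũ(t) := sup{u(s) : s ∈ [max(t−τ̄,0), t]}. If ũ(t) ≤ M̃ + ∫₀ᵗ φ(s)·ũ(s) ds for all t ≥ 0, then u(t) ≤ ũ(t) ≤ M̃·exp(∫₀ᵗ φ(s) ds) for all t ≥ 0. -/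
open Real MeasureTheory intervalIntegral Set

/-- The sliding-window running maximum `ũ(t) = sup{u(s) : s ∈ [max(t-τ̄,0), t]}`. -/
noncomputable def slidingMax (u : ℝ → ℝ) (τbar t : ℝ) : ℝ :=
  sSup (u '' Set.Icc (max (t - τbar) 0) t)

section Aux

variable {u φ : ℝ → ℝ} {τbar : ℝ}

lemma window_le {t : ℝ} (hτ : 0 ≤ τbar) (ht : 0 ≤ t) : max (t - τbar) 0 ≤ t :=
  max_le (by linarith) ht

lemma self_mem_window {t : ℝ} (hτ : 0 ≤ τbar) (ht : 0 ≤ t) :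
    t ∈ Icc (max (t - τbar) 0) t := ⟨window_le hτ ht, le_rfl⟩

lemma slidingMax_bdd (hu : Continuous u) (t : ℝ) :
    BddAbove (u '' Icc (max (t - τbar) 0) t) :=
  (isCompact_Icc.image hu).bddAbove

lemma le_slidingMax (hu : Continuous u) {s t : ℝ}
    (hs : s ∈ Icc (max (t - τbar) 0) t) : u s ≤ slidingMax u τbar t :=
  le_csSup (slidingMax_bdd hu t) (mem_image_of_mem u hs)

/-- Comparison lemma for sliding maxima at two nearby times. -/
lemma slidingMax_le_slidingMax_add (hu : Continuous u) (hτ : 0 ≤ τbar)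
    {t t' ε : ℝ} (ht : 0 ≤ t) (ht' : 0 ≤ t')
    (h : ∀ s' ∈ Icc (max (t' - τbar) 0) t', ∀ s ∈ Icc (max (t - τbar) 0) t,
        |s - s'| ≤ |t - t'| → u s' ≤ u s + ε) :
    slidingMax u τbar t' ≤ slidingMax u τbar t + ε := by
  apply csSup_le (Set.Nonempty.image u ⟨t', self_mem_window hτ ht'⟩)
  rintro y ⟨s', hs', rfl⟩
  set a := max (t - τbar) 0 with ha
  set a' := max (t' - τbar) 0 with ha'
  have haa' : |a - a'| ≤ |t - t'| := by
    have := abs_max_sub_max_le_abs (t - τbar) (t' - τbar) 0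
    simpa [ha, ha'] using this.trans_eq (by rw [show t - τbar - (t' - τbar) = t - t' by ring])
  set s : ℝ := min (max s' a) t with hsdef
  have hsmem : s ∈ Icc a t :=
    ⟨le_min (le_max_right _ _) (window_le hτ ht), min_le_right _ _⟩
  have hdist : |s - s'| ≤ |t - t'| := by
    rcases le_or_gt a s' with hc1 | hc1
    · rcases le_or_gt s' t with hc2 | hc2
      · have : s = s' := by
          rw [hsdef, max_eq_left hc1, min_eq_left hc2]
        simp [this, abs_nonneg]
      · have hst : s = t := by
          rw [hsdef, max_eq_left hc1, min_eq_right hc2.le]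
        have hs't' : s' ≤ t' := hs'.2
        rw [hst, abs_sub_comm]
        rw [abs_of_nonneg (by linarith)]
        have : t ≤ t' := by linarith
        rw [abs_sub_comm, abs_of_nonneg (by linarith)]
        linarith
    · have hat : a ≤ t := window_le hτ ht
      have hst : s = a := by
        rw [hsdef, max_eq_right hc1.le, min_eq_left hat]
      have hs'a' : a' ≤ s' := hs'.1
      rw [hst, abs_of_nonneg (by linarith)]
      calc a - s' ≤ a - a' := by linarith
        _ ≤ |a - a'| := le_abs_self _
        _ ≤ |t - t'| := haa'
  calc u s' ≤ u s + ε := h s' hs' s hsmem hdist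
    _ ≤ slidingMax u τbar t + ε := by
        have := le_slidingMax (τbar := τbar) hu hsmem
        linarith

lemma slidingMax_continuousOn (hu : Continuous u) (hτ : 0 ≤ τbar) :
    ContinuousOn (slidingMax u τbar) (Ici 0) := by
  rw [Metric.continuousOn_iff]
  intro t ht ε hε
  set C : Set ℝ := Icc (t - τbar - 1) (t + 1) with hC
  have hCc : IsCompact C := isCompact_Icc
  have huc : UniformContinuousOn u C :=
    hCc.uniformContinuousOn_of_continuous hu.continuousOn
  rw [Metric.uniformContinuousOn_iff] at huc
  obtain ⟨δ, hδpos, hδ⟩ := huc (ε / 2) (by positivity)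
  refine ⟨min δ 1, by positivity, fun t' ht' hd => ?_⟩
  have hd1 : |t' - t| < δ := by
    rw [Real.dist_eq] at hd; exact lt_of_lt_of_le hd (min_le_left _ _)
  have hd2 : |t' - t| ≤ 1 := by
    rw [Real.dist_eq] at hd; exact le_of_lt (lt_of_lt_of_le hd (min_le_right _ _))
  have hwinC : ∀ r : ℝ, 0 ≤ r → |r - t| ≤ 1 →
      Icc (max (r - τbar) 0) r ⊆ C := by
    intro r hr hrt x hx
    have h1 : r - τbar ≤ x := le_trans (le_max_left _ _) hx.1
    have h2 : x ≤ r := hx.2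
    have := abs_le.1 hrt
    exact ⟨by cases' this with h _; linarith, by cases' this with _ h; linarith⟩
  have key : ∀ r r' : ℝ, 0 ≤ r → 0 ≤ r' → |r - t| ≤ 1 → |r' - t| ≤ 1 → |r - r'| < δ →
      slidingMax u τbar r' ≤ slidingMax u τbar r + ε / 2 := by
    intro r r' hr hr' hrt hr't hrr'
    apply slidingMax_le_slidingMax_add hu hτ hr hr'
    intro s' hs' s hs hss'
    have hsC : s ∈ C := hwinC r hr hrt hs
    have hs'C : s' ∈ C := hwinC r' hr' hr't hs'
    have : dist (u s') (u s) < ε / 2 := by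
      apply hδ s' hs'C s hsC
      rw [Real.dist_eq]
      calc |s' - s| = |s - s'| := abs_sub_comm _ _
        _ ≤ |r - r'| := hss'
        _ < δ := hrr'
    rw [Real.dist_eq] at this
    have := (abs_lt.1 this).2
    linarith
  have h1 : slidingMax u τbar t' ≤ slidingMax u τbar t + ε / 2 :=
    key t t' ht ht' (by simp) hd2 (by rw [abs_sub_comm]; exact hd1)
  have h2 : slidingMax u τbar t ≤ slidingMax u τbar t' + ε / 2 :=
    key t' t ht' ht hd2 (by simp) hd1
  rw [Real.dist_eq, abs_lt]
  constructor <;> linarith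

end Aux

section Gronwall

variable {φ : ℝ → ℝ}

lemma Phi_monotone (hφ0 : ∀ t, 0 ≤ φ t)
    (hφi : ∀ a b : ℝ, IntervalIntegrable φ volume a b) :
    Monotone (fun t => ∫ s in (0:ℝ)..t, φ s) := by
  intro a b hab
  have hsplit := integral_add_adjacent_intervals (hφi 0 a) (hφi a b)
  have hpos : 0 ≤ ∫ s in a..b, φ s :=
    intervalIntegral.integral_nonneg hab (fun x _ => hφ0 x)
  simp only
  linarith

/-- Key integral inequality: `∫₀ᵀ φ e^Φ ≤ e^{Φ(T)} - 1`. -/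
lemma psi_le (hφ0 : ∀ t, 0 ≤ φ t)
    (hφi : ∀ a b : ℝ, IntervalIntegrable φ volume a b) {T : ℝ} (hT : 0 ≤ T) :
    (∫ s in (0:ℝ)..T, φ s * Real.exp (∫ r in (0:ℝ)..s, φ r))
      ≤ Real.exp (∫ s in (0:ℝ)..T, φ s) - 1 := by
  set Φ : ℝ → ℝ := fun t => ∫ s in (0:ℝ)..t, φ s with hΦdef
  have hΦc : Continuous Φ := intervalIntegral.continuous_primitive hφi 0
  have hΦm : Monotone Φ := Phi_monotone hφ0 hφi
  have hΦ0 : Φ 0 = 0 := intervalIntegral.integral_same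
  have hexpc : Continuous fun s => Real.exp (Φ s) := Real.continuous_exp.comp hΦc
  have hint : ∀ a b : ℝ, IntervalIntegrable (fun s => φ s * Real.exp (Φ s)) volume a b :=
    fun a b => (hφi a b).mul_continuousOn hexpc.continuousOn
  set ψ : ℝ → ℝ := fun t => ∫ s in (0:ℝ)..t, φ s * Real.exp (Φ s) with hψdef
  have hψc : Continuous ψ := intervalIntegral.continuous_primitive hint 0
  have hψ0 : ψ 0 = 0 := intervalIntegral.integral_same
  -- main claim with constant K > 1
  have claim : ∀ K : ℝ, 1 < K → ψ T ≤ K * (Real.exp (Φ T) - 1) := by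
    intro K hK
    by_contra hcon
    push_neg at hcon
    set S : Set ℝ := {t | t ∈ Icc 0 T ∧ K * (Real.exp (Φ t) - 1) < ψ t} with hSdef
    have hTS : T ∈ S := ⟨⟨hT, le_rfl⟩, hcon⟩
    have hSne : S.Nonempty := ⟨T, hTS⟩
    have hbdd : BddBelow S := ⟨0, fun x hx => hx.1.1⟩
    set t0 : ℝ := sInf S with ht0def
    have ht0mem : t0 ∈ Icc 0 T :=
      ⟨le_csInf hSne (fun x hx => hx.1.1), csInf_le hbdd hTS⟩
    have h0S : (0:ℝ) ∉ S := by
      intro h0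
      have := h0.2
      rw [hΦ0, hψ0] at this
      simp at this
    have ht0S : t0 ∉ S := by
      intro hmem
      have ht0pos : 0 < t0 := by
        rcases lt_or_eq_of_le ht0mem.1 with h | h
        · exact h
        · exact absurd hmem (h ▸ h0S)
      set f : ℝ → ℝ := fun s => ψ s - K * (Real.exp (Φ s) - 1) with hfdef
      have hfc : Continuous f := by
        apply hψc.sub
        exact continuous_const.mul (hexpc.sub continuous_const)
      have hft0 : 0 < f t0 := by simp only [hfdef]; linarith [hmem.2]
      have hev : ∀ᶠ s in nhds t0, 0 < f s :=
        hfc.continuousAt.eventually (eventually_gt_nhds hft0)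
      rw [Metric.eventually_nhds_iff] at hev
      obtain ⟨δ, hδpos, hδ⟩ := hev
      set s₁ : ℝ := max (t0 - δ / 2) 0 with hs₁def
      have hs₁lt : s₁ < t0 := by
        apply max_lt _ ht0pos
        linarith
      have hs₁d : dist s₁ t0 < δ := by
        rw [Real.dist_eq, abs_of_nonpos (by linarith)]
        have : t0 - δ / 2 ≤ s₁ := le_max_left _ _
        linarith
      have hs₁S : s₁ ∈ S := by
        refine ⟨⟨le_max_right _ _, le_trans hs₁lt.le ht0mem.2⟩, ?_⟩
        have := hδ hs₁d
        simp only [hfdef] at this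
        linarith
      exact absurd (csInf_le hbdd hs₁S) (not_le.2 hs₁lt)
    have ht0le : ψ t0 ≤ K * (Real.exp (Φ t0) - 1) := by
      by_contra h
      exact ht0S ⟨ht0mem, not_le.1 h⟩
    -- choose t1 ∈ S close to t0
    have hlogK : 0 < Real.log K := Real.log_pos hK
    have hΦcont : ∀ᶠ s in nhds t0, |Φ s - Φ t0| < Real.log K := by
      have : ContinuousAt (fun s => |Φ s - Φ t0|) t0 := by fun_prop
      have h0 : |Φ t0 - Φ t0| < Real.log K := by simpa using hlogK
      exact this.eventually (eventually_lt_nhds h0)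
    rw [Metric.eventually_nhds_iff] at hΦcont
    obtain ⟨η, hηpos, hη⟩ := hΦcont
    obtain ⟨t1, ht1S, ht1lt⟩ := exists_lt_of_csInf_lt hSne (show sInf S < t0 + η by linarith)
    have ht01 : t0 ≤ t1 := csInf_le hbdd ht1S
    have ht1d : dist t1 t0 < η := by
      rw [Real.dist_eq, abs_of_nonneg (by linarith)]; linarith
    have hΦd : Φ t1 - Φ t0 < Real.log K := by
      have := hη ht1d
      exact lt_of_le_of_lt (le_abs_self _) this
    have hΦd0 : 0 ≤ Φ t1 - Φ t0 := by linarith [hΦm ht01]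
    -- split and bound the integral
    have hsplit : ψ t1 = ψ t0 + ∫ s in t0..t1, φ s * Real.exp (Φ s) :=
      (integral_add_adjacent_intervals (hint 0 t0) (hint t0 t1)).symm
    have hφsplit : (∫ s in t0..t1, φ s) = Φ t1 - Φ t0 := by
      have := integral_add_adjacent_intervals (hφi 0 t0) (hφi t0 t1)
      simp only [hΦdef]
      linarith
    have hbound : (∫ s in t0..t1, φ s * Real.exp (Φ s))
        ≤ Real.exp (Φ t1) * (Φ t1 - Φ t0) := by
      have h1 : (∫ s in t0..t1, φ s * Real.exp (Φ s))
          ≤ ∫ s in t0..t1, φ s * Real.exp (Φ t1) := by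
        apply intervalIntegral.integral_mono_on ht01 (hint t0 t1)
          ((hφi t0 t1).mul_const _)
        intro x hx
        exact mul_le_mul_of_nonneg_left (Real.exp_le_exp.2 (hΦm hx.2)) (hφ0 x)
      have h2 : (∫ s in t0..t1, φ s * Real.exp (Φ t1))
          = (Φ t1 - Φ t0) * Real.exp (Φ t1) := by
        rw [intervalIntegral.integral_mul_const, hφsplit]
      rw [h2] at h1
      linarith [h1]
    -- the key exponential estimate
    have hkey : Real.exp (Φ t1) * (Φ t1 - Φ t0)
        ≤ K * (Real.exp (Φ t1) - Real.exp (Φ t0)) := by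
      set a := Φ t0
      set d := Φ t1 - Φ t0 with hd
      have hb : Φ t1 = a + d := by ring
      rw [hb, Real.exp_add]
      have he1 : Real.exp d ≤ K := by
        calc Real.exp d ≤ Real.exp (Real.log K) := Real.exp_le_exp.2 hΦd.le
          _ = K := Real.exp_log (by linarith)
      have he2 : d + 1 ≤ Real.exp d := Real.add_one_le_exp d
      have he3 : 0 < Real.exp a := Real.exp_pos a
      have hAd : 0 ≤ Real.exp a * d := mul_nonneg he3.le hΦd0
      have f1 : Real.exp a * d ≤ Real.exp a * Real.exp d - Real.exp a := by
        nlinarith [mul_le_mul_of_nonneg_left he2 he3.le]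
      calc Real.exp a * Real.exp d * d = Real.exp d * (Real.exp a * d) := by ring
        _ ≤ K * (Real.exp a * d) := mul_le_mul_of_nonneg_right he1 hAd
        _ ≤ K * (Real.exp a * Real.exp d - Real.exp a) :=
            mul_le_mul_of_nonneg_left f1 (by linarith)
    have : ψ t1 ≤ K * (Real.exp (Φ t1) - 1) := by
      rw [hsplit]
      calc ψ t0 + ∫ s in t0..t1, φ s * Real.exp (Φ s)
          ≤ K * (Real.exp (Φ t0) - 1) + Real.exp (Φ t1) * (Φ t1 - Φ t0) := by
            linarith [hbound]
        _ ≤ K * (Real.exp (Φ t0) - 1) + K * (Real.exp (Φ t1) - Real.exp (Φ t0)) := by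
            linarith [hkey]
        _ = K * (Real.exp (Φ t1) - 1) := by ring
    linarith [ht1S.2]
  -- pass to the limit K → 1
  set E : ℝ := Real.exp (Φ T) - 1 with hE
  have hE0 : 0 ≤ E := by
    have : (0:ℝ) ≤ Φ T := by
      rw [← hΦ0]; exact hΦm hT
    simp only [hE]
    linarith [Real.one_le_exp this]
  by_contra hc
  push_neg at hc
  set δ : ℝ := ψ T - E with hδ
  have hδ0 : 0 < δ := by simp only [hδ]; linarith
  have hK1 : 1 < 1 + δ / (E + 1) := by
    have : 0 < δ / (E + 1) := div_pos hδ0 (by linarith)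
    linarith
  have := claim (1 + δ / (E + 1)) hK1
  have hEE : E / (E + 1) < 1 := (div_lt_one (by linarith)).2 (by linarith)
  have hcalc : (1 + δ / (E + 1)) * E = E + δ * (E / (E + 1)) := by
    field_simp
  rw [hcalc] at this
  have : ψ T < E + δ := by
    have h2 : δ * (E / (E + 1)) < δ * 1 := by
      apply mul_lt_mul_of_pos_left hEE hδ0
    linarith
  simp only [hδ] at this
  linarith

/-- Gronwall inequality (integral form) for a continuous function on `[0, ∞)`. -/
lemma gronwall_cont {g : ℝ → ℝ} (M : ℝ) (hM : 0 ≤ M) (hφ0 : ∀ t, 0 ≤ φ t)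
    (hφi : ∀ a b : ℝ, IntervalIntegrable φ volume a b)
    (hg : ContinuousOn g (Ici 0))
    (hyp : ∀ t : ℝ, 0 ≤ t → g t ≤ M + ∫ s in (0:ℝ)..t, φ s * g s) :
    ∀ T : ℝ, 0 ≤ T → g T ≤ M * Real.exp (∫ s in (0:ℝ)..T, φ s) := by
  intro T hT
  set Φ : ℝ → ℝ := fun t => ∫ s in (0:ℝ)..t, φ s with hΦdef
  have hΦc : Continuous Φ := intervalIntegral.continuous_primitive hφi 0
  have hΦm : Monotone Φ := Phi_monotone hφ0 hφi
  have hΦ0 : Φ 0 = 0 := intervalIntegral.integral_same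
  have hexpc : Continuous fun s => Real.exp (Φ s) := Real.continuous_exp.comp hΦc
  have hgint : ∀ a b : ℝ, 0 ≤ a → 0 ≤ b →
      IntervalIntegrable (fun s => φ s * g s) volume a b := by
    intro a b ha hb
    apply (hφi a b).mul_continuousOn
    apply hg.mono
    intro x hx
    rw [uIcc_eq_union] at hx
    rcases hx with hx | hx
    · exact le_trans ha hx.1
    · exact le_trans hb hx.1
  -- Claim: for every ε > 0, g T ≤ (M + ε) exp (Φ T)
  have claim : ∀ ε : ℝ, 0 < ε → g T ≤ (M + ε) * Real.exp (Φ T) := by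
    intro ε hε
    by_contra hcon
    push_neg at hcon
    set S : Set ℝ := {t | t ∈ Icc 0 T ∧ (M + ε) * Real.exp (Φ t) < g t} with hSdef
    have hTS : T ∈ S := ⟨⟨hT, le_rfl⟩, hcon⟩
    have hSne : S.Nonempty := ⟨T, hTS⟩
    have hbdd : BddBelow S := ⟨0, fun x hx => hx.1.1⟩
    set t0 : ℝ := sInf S with ht0def
    have ht0mem : t0 ∈ Icc 0 T :=
      ⟨le_csInf hSne (fun x hx => hx.1.1), csInf_le hbdd hTS⟩
    have h0S : (0:ℝ) ∉ S := by
      intro h0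
      have h1 := h0.2
      have h2 := hyp 0 le_rfl
      rw [intervalIntegral.integral_same] at h2
      rw [hΦ0, Real.exp_zero, mul_one] at h1
      linarith
    have ht0S : t0 ∉ S := by
      intro hmem
      have ht0pos : 0 < t0 := by
        rcases lt_or_eq_of_le ht0mem.1 with h | h
        · exact h
        · exact absurd hmem (h ▸ h0S)
      set f : ℝ → ℝ := fun s => g s - (M + ε) * Real.exp (Φ s) with hfdef
      have hfc : ContinuousOn f (Ici 0) :=
        hg.sub (continuous_const.mul hexpc).continuousOn
      have hft0 : 0 < f t0 := by simp only [hfdef]; linarith [hmem.2]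
      have hev : ∀ᶠ s in nhdsWithin t0 (Ici 0), 0 < f s :=
        (hfc t0 ht0mem.1).eventually (eventually_gt_nhds hft0)
      rw [eventually_nhdsWithin_iff, Metric.eventually_nhds_iff] at hev
      obtain ⟨δ, hδpos, hδ⟩ := hev
      set s₁ : ℝ := max (t0 - δ / 2) 0 with hs₁def
      have hs₁lt : s₁ < t0 := by
        apply max_lt _ ht0pos
        linarith
      have hs₁d : dist s₁ t0 < δ := by
        rw [Real.dist_eq, abs_of_nonpos (by linarith)]
        have : t0 - δ / 2 ≤ s₁ := le_max_left _ _
        linarith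
      have hs₁S : s₁ ∈ S := by
        refine ⟨⟨le_max_right _ _, le_trans hs₁lt.le ht0mem.2⟩, ?_⟩
        have := hδ hs₁d (mem_Ici.2 (le_max_right _ _))
        simp only [hfdef] at this
        linarith
      exact absurd (csInf_le hbdd hs₁S) (not_le.2 hs₁lt)
    have hb : ∀ s ∈ Icc (0:ℝ) t0, g s ≤ (M + ε) * Real.exp (Φ s) := by
      intro s hs
      by_contra h
      push_neg at h
      have hsS : s ∈ S := ⟨⟨hs.1, le_trans hs.2 ht0mem.2⟩, h⟩
      have := csInf_le hbdd hsS
      have hseq : s = t0 := le_antisymm hs.2 this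
      exact ht0S (hseq ▸ hsS)
    -- local bound for g near t0, and continuity of Φ at t0
    set C : ℝ := max (g t0 + 1) 1 with hCdef
    have hC1 : 1 ≤ C := le_max_right _ _
    have hC0 : 0 < C := lt_of_lt_of_le one_pos hC1
    have hgev : ∀ᶠ s in nhdsWithin t0 (Ici 0), g s < g t0 + 1 :=
      (hg t0 ht0mem.1).eventually (eventually_lt_nhds (by linarith))
    rw [eventually_nhdsWithin_iff, Metric.eventually_nhds_iff] at hgev
    obtain ⟨δ1, hδ1pos, hδ1⟩ := hgev
    have hΦev : ∀ᶠ s in nhds t0, |Φ s - Φ t0| < ε / C := by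
      have hcont : ContinuousAt (fun s => |Φ s - Φ t0|) t0 := by fun_prop
      have h0 : |Φ t0 - Φ t0| < ε / C := by
        simpa using div_pos hε hC0
      exact hcont.eventually (eventually_lt_nhds h0)
    rw [Metric.eventually_nhds_iff] at hΦev
    obtain ⟨δ2, hδ2pos, hδ2⟩ := hΦev
    obtain ⟨t1, ht1S, ht1lt⟩ := exists_lt_of_csInf_lt hSne
      (show sInf S < t0 + min δ1 δ2 by
        have := lt_min hδ1pos hδ2pos
        linarith)
    have ht01 : t0 ≤ t1 := csInf_le hbdd ht1S
    have ht10 : 0 ≤ t1 := ht1S.1.1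
    have ht1d1 : dist t1 t0 < δ1 := by
      rw [Real.dist_eq, abs_of_nonneg (by linarith)]
      have := min_le_left δ1 δ2
      linarith
    have ht1d2 : dist t1 t0 < δ2 := by
      rw [Real.dist_eq, abs_of_nonneg (by linarith)]
      have := min_le_right δ1 δ2
      linarith
    have hΦd : Φ t1 - Φ t0 < ε / C := by
      have := hδ2 ht1d2
      exact lt_of_le_of_lt (le_abs_self _) this
    -- split the integral
    have hsplit : (∫ s in (0:ℝ)..t1, φ s * g s)
        = (∫ s in (0:ℝ)..t0, φ s * g s) + ∫ s in t0..t1, φ s * g s :=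
      (integral_add_adjacent_intervals (hgint 0 t0 le_rfl ht0mem.1)
        (hgint t0 t1 ht0mem.1 ht10)).symm
    -- first part
    have hexpint : ∀ a b : ℝ, IntervalIntegrable
        (fun s => φ s * ((M + ε) * Real.exp (Φ s))) volume a b :=
      fun a b => (hφi a b).mul_continuousOn
        (continuous_const.mul hexpc).continuousOn
    have hpart1 : (∫ s in (0:ℝ)..t0, φ s * g s)
        ≤ (M + ε) * (Real.exp (Φ t0) - 1) := by
      have h1 : (∫ s in (0:ℝ)..t0, φ s * g s)
          ≤ ∫ s in (0:ℝ)..t0, φ s * ((M + ε) * Real.exp (Φ s)) := by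
        apply intervalIntegral.integral_mono_on ht0mem.1
          (hgint 0 t0 le_rfl ht0mem.1) (hexpint 0 t0)
        intro x hx
        exact mul_le_mul_of_nonneg_left (hb x hx) (hφ0 x)
      have h2 : (∫ s in (0:ℝ)..t0, φ s * ((M + ε) * Real.exp (Φ s)))
          = (M + ε) * ∫ s in (0:ℝ)..t0, φ s * Real.exp (Φ s) := by
        rw [← intervalIntegral.integral_const_mul]
        congr 1
        ext s
        ring
      have h3 := psi_le hφ0 hφi ht0mem.1
      calc (∫ s in (0:ℝ)..t0, φ s * g s)
          ≤ (M + ε) * ∫ s in (0:ℝ)..t0, φ s * Real.exp (Φ s) := by rw [← h2]; exact h1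
        _ ≤ (M + ε) * (Real.exp (Φ t0) - 1) := by
            apply mul_le_mul_of_nonneg_left h3 (by linarith)
    -- second part
    have hφsplit : (∫ s in t0..t1, φ s) = Φ t1 - Φ t0 := by
      have := integral_add_adjacent_intervals (hφi 0 t0) (hφi t0 t1)
      simp only [hΦdef]
      linarith
    have hpart2 : (∫ s in t0..t1, φ s * g s) < ε := by
      have h1 : (∫ s in t0..t1, φ s * g s) ≤ ∫ s in t0..t1, φ s * C := by
        apply intervalIntegral.integral_mono_on ht01
          (hgint t0 t1 ht0mem.1 ht10) ((hφi t0 t1).mul_const _)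
        intro x hx
        apply mul_le_mul_of_nonneg_left _ (hφ0 x)
        have hx0 : 0 ≤ x := le_trans ht0mem.1 hx.1
        have hxd : dist x t0 < δ1 := by
          rw [Real.dist_eq, abs_of_nonneg (by linarith [hx.1])]
          have := hx.2
          rw [Real.dist_eq, abs_of_nonneg (by linarith)] at ht1d1
          linarith
        have := hδ1 hxd hx0
        calc g x ≤ g t0 + 1 := this.le
          _ ≤ C := le_max_left _ _
      have h2 : (∫ s in t0..t1, φ s * C) = (Φ t1 - Φ t0) * C := by
        rw [intervalIntegral.integral_mul_const, hφsplit]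
      have h3 : (Φ t1 - Φ t0) * C < ε := by
        calc (Φ t1 - Φ t0) * C < (ε / C) * C := by
              apply mul_lt_mul_of_pos_right hΦd hC0
          _ = ε := by field_simp
      linarith [h1, h2 ▸ h1]
    -- conclude
    have hfinal : g t1 < (M + ε) * Real.exp (Φ t1) := by
      have h0 := hyp t1 ht10
      rw [hsplit] at h0
      have hmono : Real.exp (Φ t0) ≤ Real.exp (Φ t1) :=
        Real.exp_le_exp.2 (hΦm ht01)
      calc g t1 ≤ M + ((∫ s in (0:ℝ)..t0, φ s * g s) + ∫ s in t0..t1, φ s * g s) := h0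
        _ < M + ((M + ε) * (Real.exp (Φ t0) - 1) + ε) := by linarith [hpart1, hpart2]
        _ = (M + ε) * Real.exp (Φ t0) := by ring
        _ ≤ (M + ε) * Real.exp (Φ t1) := by
            apply mul_le_mul_of_nonneg_left hmono (by linarith)
    linarith [ht1S.2]
  -- pass to the limit ε → 0
  by_contra hc
  push_neg at hc
  set e : ℝ := Real.exp (Φ T) with he
  have he0 : 0 < e := Real.exp_pos _
  set ε : ℝ := (g T - M * e) / (2 * e) with hε
  have hε0 : 0 < ε := div_pos (by linarith) (by linarith)
  have := claim ε hε0
  have : g T ≤ M * e + ε * e := by linarith [this, (by ring : (M + ε) * e = M * e + ε * e)]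
  have hεe : ε * e = (g T - M * e) / 2 := by
    rw [hε]
    field_simp
  rw [hεe] at this
  linarith

end Gronwall

/-- delayed Gronwall argument from the proof of Theorem 3.1. -/
theorem stmt3 (u φ : ℝ → ℝ) (τbar Mtilde : ℝ)
    (hu_cont : Continuous u) (hu_nonneg : ∀ t, 0 ≤ u t)
    (hτ : 0 ≤ τbar) (hM : 0 ≤ Mtilde)
    (hφ_nonneg : ∀ t, 0 ≤ φ t)
    (hφ_int : ∀ a c : ℝ, IntervalIntegrable φ volume a c)
    (hineq : ∀ t : ℝ, 0 ≤ t →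
      slidingMax u τbar t ≤ Mtilde + ∫ s in (0:ℝ)..t, φ s * slidingMax u τbar s) :
    ∀ t : ℝ, 0 ≤ t →
      u t ≤ slidingMax u τbar t
      ∧ slidingMax u τbar t ≤ Mtilde * Real.exp (∫ s in (0:ℝ)..t, φ s) := by
  intro t ht
  refine ⟨le_slidingMax hu_cont (self_mem_window hτ ht), ?_⟩
  exact gronwall_cont Mtilde hM hφ_nonneg hφ_int
    (slidingMax_continuousOn hu_cont hτ) hineq t ht
end
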